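/- If E is an equivalence relation on the Cantor space {0,1}^ℕ such that the eventual-agreement relation E₀ is Borel reducible to E, then there is no Borel function g from {0,1}^ℕ (with E) to a Polish space Y such that x₁ E x₂ if and only if g(x₁) = g(x₂). Equivalently stated for E = E₀: there is no Borel function g : {0,1}^ℕ → ℝ such that two sequences are E₀-equivalent iff they have the same image under g. -/

import Mathlib

/-- The eventual-agreement equivalence relation `E₀` on Cantor space `{0,1}^ℕ`. -/
def E0 (x y : ℕ → Bool) : Prop := ∃ N, ∀ n ≥ N, x n = y n

open Topology Filter Set

namespace E0Aux

lemma e0_refl (x : ℕ → Bool) : E0 x x := ⟨0, fun _ _ => rfl⟩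

lemma e0_symm {x y : ℕ → Bool} (h : E0 x y) : E0 y x :=
  h.imp fun _ hN n hn => (hN n hn).symm

/-- The "flip by `τ`" homeomorphism of Cantor space. -/
def flipMap (τ : ℕ → Bool) : (ℕ → Bool) ≃ₜ (ℕ → Bool) where
  toFun x n := xor (x n) (τ n)
  invFun x n := xor (x n) (τ n)
  left_inv x := by
    funext n
    show xor (xor (x n) (τ n)) (τ n) = x n
    cases x n <;> cases τ n <;> rfl
  right_inv x := by
    funext n
    show xor (xor (x n) (τ n)) (τ n) = x n
    cases x n <;> cases τ n <;> rfl
  continuous_toFun := continuous_pi fun n =>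
    (continuous_of_discreteTopology (f := fun b => xor b (τ n))).comp (continuous_apply n)
  continuous_invFun := continuous_pi fun n =>
    (continuous_of_discreteTopology (f := fun b => xor b (τ n))).comp (continuous_apply n)

/-- The basic cylinder around `y` of length `N`. -/
def cyl (y : ℕ → Bool) (N : ℕ) : Set (ℕ → Bool) := {x | ∀ i < N, x i = y i}

lemma mem_cyl_self (y : ℕ → Bool) (N : ℕ) : y ∈ cyl y N := fun _ _ => rfl

lemma exists_cyl_subset {u : Set (ℕ → Bool)} (hu : IsOpen u) {y : ℕ → Bool} (hy : y ∈ u) :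
    ∃ N, cyl y N ⊆ u := by
  obtain ⟨I, v, hv, hsub⟩ := isOpen_pi_iff.mp hu y hy
  refine ⟨(I.sup id) + 1, fun x hx => hsub ?_⟩
  intro i hi
  have hiN : i < (I.sup id) + 1 := Nat.lt_succ_of_le (Finset.le_sup (f := id) hi)
  rw [hx i hiN]
  exact (hv i hi).2

lemma isMeagre_iUnion' {X : Type*} [TopologicalSpace X] {ι : Type*} [Countable ι]
    {s : ι → Set X} (h : ∀ i, IsMeagre (s i)) : IsMeagre (⋃ i, s i) := by
  rw [IsMeagre, compl_iUnion]
  exact (countable_iInter_mem).mpr h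

/-- Generic ergodicity of `E₀`: an invariant Baire-measurable set is meager or residual. -/
lemma meager_or_residual {t : Set (ℕ → Bool)} (ht : BaireMeasurableSet t)
    (hinv : ∀ x y, E0 x y → x ∈ t → y ∈ t) :
    IsMeagre t ∨ t ∈ residual (ℕ → Bool) := by
  obtain ⟨u, hu, htu⟩ := ht.residualEq_isOpen
  have hres : {x | x ∈ t ↔ x ∈ u} ∈ residual (ℕ → Bool) := eventuallyEq_set.mp htu
  rcases eq_empty_or_nonempty u with rfl | ⟨y, hy⟩
  · left
    rw [IsMeagre]
    refine mem_of_superset hres fun x hx => ?_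
    simp only [mem_setOf_eq, mem_empty_iff_false, iff_false] at hx
    exact hx
  · right
    obtain ⟨N, hN⟩ := exists_cyl_subset hu hy
    have hbase : IsMeagre (cyl y N \ t) := by
      have hm : IsMeagre {x | x ∈ t ↔ x ∈ u}ᶜ := by
        rw [IsMeagre, compl_compl]; exact hres
      refine hm.mono fun x hx => ?_
      rcases hx with ⟨hxc, hxt⟩
      intro hiff
      exact hxt (hiff.mpr (hN hxc))
    -- every cylinder of length N is comeager-in-itself for t
    have hall : ∀ z : ℕ → Bool, IsMeagre (cyl z N \ t) := by
      intro z
      set τ : ℕ → Bool := fun n => if n < N then xor (y n) (z n) else false with hτ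
      set φ := flipMap τ with hφ
      have hτ' : ∀ n ≥ N, τ n = false := by
        intro n hn; simp [hτ, Nat.not_lt_of_ge hn]
      have hE : ∀ x : ℕ → Bool, E0 (φ x) x := by
        intro x
        refine ⟨N, fun n hn => ?_⟩
        show xor (x n) (τ n) = x n
        rw [hτ' n hn]; cases x n <;> rfl
      have hpt : φ ⁻¹' t = t := by
        ext x
        constructor
        · intro hx; exact hinv (φ x) x (hE x) hx
        · intro hx; exact hinv x (φ x) (e0_symm (hE x)) hx
      have hpc : φ ⁻¹' (cyl y N) = cyl z N := by
        ext x
        simp only [mem_preimage]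
        constructor
        · intro hx i hi
          have := hx i hi
          have hτi : τ i = xor (y i) (z i) := by simp [hτ, hi]
          revert this
          show xor (x i) (τ i) = y i → x i = z i
          rw [hτi]
          cases x i <;> cases y i <;> cases z i <;> decide
        · intro hx i hi
          have := hx i hi
          have hτi : τ i = xor (y i) (z i) := by simp [hτ, hi]
          show xor (x i) (τ i) = y i
          rw [hτi, this]
          cases y i <;> cases z i <;> decide
      have : cyl z N \ t = φ ⁻¹' (cyl y N \ t) := by
        rw [preimage_diff, hpt, hpc]
      rw [this]
      exact hbase.preimage_of_isOpenMap φ.continuous φ.isOpenMap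
    -- cover the complement of t by countably many such differences
    have hcover : tᶜ ⊆ ⋃ v : Fin N → Bool,
        (cyl (fun n => if h : n < N then v ⟨n, h⟩ else false) N \ t) := by
      intro x hx
      refine mem_iUnion.mpr ⟨fun i => x i, ?_, hx⟩
      intro i hi
      simp [hi]
    have : IsMeagre tᶜ :=
      (isMeagre_iUnion' fun v => hall _).mono hcover
    rwa [IsMeagre, compl_compl] at this

lemma dense_compl_singleton' (x : ℕ → Bool) : Dense ({x}ᶜ : Set (ℕ → Bool)) := by
  rw [dense_iff_inter_open]
  rintro u hu ⟨y, hy⟩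
  obtain ⟨N, hN⟩ := exists_cyl_subset hu hy
  by_cases hxy : y = x
  · subst hxy
    refine ⟨Function.update y N (!y N), hN ?_, ?_⟩
    · intro i hi
      exact Function.update_of_ne (Nat.ne_of_lt hi) _ _
    · simp only [mem_compl_iff, mem_singleton_iff]
      intro h
      have := congrFun h N
      rw [Function.update_self] at this
      cases y N <;> simp_all
  · exact ⟨y, hy, hxy⟩

lemma isMeagre_of_countable {s : Set (ℕ → Bool)} (h : s.Countable) : IsMeagre s := by
  rw [IsMeagre]
  have : sᶜ = ⋂ x ∈ s, ({x}ᶜ : Set (ℕ → Bool)) := by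
    simp [← compl_iUnion, biUnion_of_singleton]
  rw [this]
  exact (countable_bInter_mem h).mpr fun x _ =>
    residual_of_dense_open isOpen_compl_singleton (dense_compl_singleton' x)

lemma e0_class_countable (x : ℕ → Bool) : {y | E0 x y}.Countable := by
  have : {y | E0 x y} = ⋃ N : ℕ, {y | ∀ n ≥ N, x n = y n} := by
    ext y; simp [E0, mem_iUnion]
  rw [this]
  refine countable_iUnion fun N => ?_
  have hsub : {y : ℕ → Bool | ∀ n ≥ N, x n = y n} ⊆
      Set.range (fun v : Fin N → Bool => fun n => if h : n < N then v ⟨n, h⟩ else x n) := by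
    intro y hy
    refine ⟨fun i => y i, ?_⟩
    funext n
    by_cases hn : n < N
    · simp [hn]
    · simp only [hn, dif_neg, not_false_iff]
      exact hy n (Nat.le_of_not_lt hn)
  exact (countable_range _).mono hsub

end E0Aux

open E0Aux in
/-- If `E₀` is Borel reducible to an equivalence relation `E` on Cantor space, then there is
no Borel function `g` into a Polish space `Y` such that `x₁ E x₂ ↔ g x₁ = g x₂`. -/
theorem stmt0 {Y : Type*} [TopologicalSpace Y] [PolishSpace Y] [MeasurableSpace Y] [BorelSpace Y]
    (E : (ℕ → Bool) → (ℕ → Bool) → Prop) (hE : Equivalence E)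
    (f : (ℕ → Bool) → (ℕ → Bool)) (hf : Measurable f)
    (hred : ∀ x y, E0 x y ↔ E (f x) (f y)) :
    ¬ ∃ g : (ℕ → Bool) → Y, Measurable g ∧ ∀ x y, E x y ↔ g x = g y := by
  rintro ⟨g, hg, hgiff⟩
  set h : (ℕ → Bool) → Y := fun x => g (f x) with hh
  have hhm : Measurable h := hg.comp hf
  have hiff : ∀ x y, E0 x y ↔ h x = h y := fun x y => (hred x y).trans (hgiff _ _)
  letI := TopologicalSpace.upgradeIsCompletelyMetrizable Y
  have hYne : Nonempty Y := ⟨h (fun _ => false)⟩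
  set u : ℕ → Y := TopologicalSpace.denseSeq Y with hu
  have hud : DenseRange u := TopologicalSpace.denseRange_denseSeq Y
  -- invariance of preimages under h
  have hinv : ∀ B : Set Y, ∀ x y, E0 x y → x ∈ h ⁻¹' B → y ∈ h ⁻¹' B := by
    intro B x y hxy hx
    have : h x = h y := (hiff x y).mp hxy
    simpa [← this] using hx
  have key : ∀ k : ℕ, ∃ m : ℕ,
      (h ⁻¹' Metric.ball (u m) (1 / (k + 1))) ∈ residual (ℕ → Bool) := by
    intro k
    by_contra hc
    push_neg at hc
    have hmeag : ∀ m, IsMeagre (h ⁻¹' Metric.ball (u m) (1 / (k + 1))) := by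
      intro m
      rcases meager_or_residual
          ((hhm Metric.isOpen_ball.measurableSet).baireMeasurableSet)
          (hinv _) with h1 | h1
      · exact h1
      · exact absurd h1 (hc m)
    have hU : IsMeagre (⋃ m, h ⁻¹' Metric.ball (u m) (1 / (k + 1))) :=
      isMeagre_iUnion' hmeag
    have huniv : (⋃ m, h ⁻¹' Metric.ball (u m) (1 / (k + 1))) = univ := by
      ext x
      simp only [mem_iUnion, mem_preimage, Metric.mem_ball, mem_univ, iff_true]
      have hpos : (0 : ℝ) < 1 / (k + 1) := by positivity
      obtain ⟨m, hm⟩ := hud.exists_dist_lt (h x) hpos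
      exact ⟨m, by simpa [dist_comm] using hm⟩
    rw [huniv, IsMeagre, compl_univ] at hU
    have := dense_of_mem_residual hU
    obtain ⟨z, hz⟩ := this.nonempty
    exact hz
  choose m hm using key
  set R : Set (ℕ → Bool) := ⋂ k : ℕ, h ⁻¹' Metric.ball (u (m k)) (1 / (k + 1)) with hR
  have hRres : R ∈ residual (ℕ → Bool) := (countable_iInter_mem).mpr hm
  obtain ⟨x₀, hx₀⟩ := (dense_of_mem_residual hRres).nonempty
  have hconst : ∀ x ∈ R, h x = h x₀ := by
    intro x hx
    have hb : ∀ k : ℕ, dist (h x) (h x₀) ≤ 2 * (1 / ((k : ℝ) + 1)) := by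
      intro k
      have h1 : dist (h x) (u (m k)) < 1 / ((k : ℝ) + 1) := by
        have := mem_iInter.mp hx k; simpa [Metric.mem_ball] using this
      have h2 : dist (h x₀) (u (m k)) < 1 / ((k : ℝ) + 1) := by
        have := mem_iInter.mp hx₀ k; simpa [Metric.mem_ball] using this
      calc dist (h x) (h x₀) ≤ dist (h x) (u (m k)) + dist (u (m k)) (h x₀) :=
            dist_triangle _ _ _
        _ ≤ 1 / ((k : ℝ) + 1) + 1 / ((k : ℝ) + 1) := by
            rw [dist_comm (u (m k))]; exact add_le_add h1.le h2.le
        _ = 2 * (1 / ((k : ℝ) + 1)) := by ring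
    have hlim : Filter.Tendsto (fun k : ℕ => 2 * (1 / ((k : ℝ) + 1))) atTop (nhds 0) := by
      have := tendsto_one_div_add_atTop_nhds_zero_nat (𝕜 := ℝ)
      simpa using this.const_mul 2
    have : dist (h x) (h x₀) ≤ 0 := ge_of_tendsto' hlim hb
    exact dist_le_zero.mp this
  have hsub : R ⊆ {y | E0 x₀ y} := by
    intro x hx
    exact (hiff x₀ x).mpr (hconst x hx).symm
  have hmeagR : IsMeagre R := (isMeagre_of_countable (e0_class_countable x₀)).mono hsub
  have : (∅ : Set (ℕ → Bool)) ∈ residual (ℕ → Bool) := by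
    have := inter_mem hRres hmeagR
    rwa [inter_compl_self] at this
  obtain ⟨z, hz⟩ := (dense_of_mem_residual this).nonempty
  exact hz
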